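/- Let E be a finite-dimensional real inner product space, let M : E ≃ₗᵢ[ℝ] E be a linear isometry equivalence, let c ∈ E, and define the affine isometry f : E → E by f(x) = M x + c. Let K = {v ∈ E : M v = v} be the fixed subspace of M and let P_K denote the orthogonal projection of E onto K. Then the infimum of the displacement ‖f x − x‖ over x ∈ E equals ‖P_K c‖, and this infimum is attained: there exists x₀ ∈ E with ‖f x₀ − x₀‖ = ‖P_K c‖, while ‖f x − x‖ ≥ ‖P_K c‖ for every x ∈ E. In particular every affine isometry of a finite-dimensional Euclidean space is semisimple (its displacement function attains its minimum). -/

import Mathlib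

/-- Every affine isometry `f(x) = M x + c` of a finite-dimensional Euclidean space is
semisimple: its displacement function `x ↦ ‖f x − x‖` attains its infimum, which
equals the norm of the orthogonal projection of `c` onto the fixed subspace
`K = ker (M − id)` of `M`. -/
theorem affineIsometry_displacement_min
    {E : Type*} [NormedAddCommGroup E] [InnerProductSpace ℝ E] [FiniteDimensional ℝ E]
    (M : E ≃ₗᵢ[ℝ] E) (c : E) (f : E → E) (hf : ∀ x, f x = M x + c)
    (K : Submodule ℝ E) (hK : K = LinearMap.ker ((M.toLinearEquiv : E →ₗ[ℝ] E) - LinearMap.id)) :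
    (∃ x₀ : E, ‖f x₀ - x₀‖ = ‖(Submodule.orthogonalProjection K c : E)‖) ∧
      ∀ x : E, ‖(Submodule.orthogonalProjection K c : E)‖ ≤ ‖f x - x‖ := by
  set A : E →ₗ[ℝ] E := (M.toLinearEquiv : E →ₗ[ℝ] E) - LinearMap.id with hA
  have hAapp : ∀ x, A x = M x - x := fun x => rfl
  have hKmem : ∀ v, v ∈ K ↔ M v = v := by
    intro v
    rw [hK, LinearMap.mem_ker]
    constructor
    · intro h; have := sub_eq_zero.mp h; exact this
    · intro h; show M v - v = 0; rw [h, sub_self]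
  -- A x ⟂ K for all x
  have hperp : ∀ x, (A x) ∈ Kᗮ := by
    intro x
    rw [Submodule.mem_orthogonal]
    intro v hv
    have hMv : M v = v := (hKmem v).mp hv
    have : inner ℝ (M x) v = (inner ℝ x v : ℝ) := by
      conv_lhs => rw [← hMv]
      exact M.inner_map_map x v
    rw [hAapp, inner_sub_right]
    have h' : inner ℝ v (M x) = (inner ℝ v x : ℝ) := by
      rw [real_inner_comm, this, real_inner_comm]
    rw [h', sub_self]
  -- (range A)ᗮ = K
  have hrange : (LinearMap.range A)ᗮ = K := by
    ext v
    rw [Submodule.mem_orthogonal, hKmem]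
    constructor
    · intro h
      have h1 : inner ℝ (A v) v = (0 : ℝ) := h (A v) ⟨v, rfl⟩
      have h2 : inner ℝ (M v) v = (‖v‖ ^ 2 : ℝ) := by
        rw [hAapp, inner_sub_left, real_inner_self_eq_norm_sq] at h1
        linarith
      have h3 : ‖M v - v‖ ^ 2 = 0 := by
        rw [← real_inner_self_eq_norm_sq, inner_sub_sub_self]
        have := M.norm_map v
        rw [real_inner_self_eq_norm_sq, real_inner_self_eq_norm_sq, this]
        have h2' : inner ℝ v (M v) = (‖v‖ ^ 2 : ℝ) := by rw [real_inner_comm]; exact h2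
        linarith
      have : M v - v = 0 := by
        have := pow_eq_zero_iff (n := 2) (by norm_num) |>.mp h3
        exact norm_eq_zero.mp this
      exact sub_eq_zero.mp this
    · intro h u hu
      obtain ⟨x, rfl⟩ := hu
      have := hperp x
      rw [Submodule.mem_orthogonal] at this
      rw [real_inner_comm]
      exact this v ((hKmem v).mpr h)
  have hrange2 : LinearMap.range A = Kᗮ := by
    rw [← hrange, Submodule.orthogonal_orthogonal]
  -- existence
  constructor
  · have hc : c - (Submodule.orthogonalProjection K c : E) ∈ Kᗮ :=
      Submodule.sub_starProjection_mem_orthogonal c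
    rw [← hrange2] at hc
    obtain ⟨x, hx⟩ := hc
    refine ⟨-x, ?_⟩
    have : f (-x) - (-x) = (Submodule.orthogonalProjection K c : E) := by
      rw [hf]
      have : M (-x) = -(M x) := map_neg M x
      rw [this]
      have hx' : M x - x = c - (Submodule.orthogonalProjection K c : E) := hx
      have : M x = c - (Submodule.orthogonalProjection K c : E) + x := by
        rw [← hx']; abel
      rw [this]; abel
    rw [this]
  · intro x
    have key : (Submodule.orthogonalProjection K (f x - x) : E) = (Submodule.orthogonalProjection K c : E) := by
      have : f x - x = A x + c := by rw [hf, hAapp]; abel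
      rw [this, map_add]
      have : Submodule.orthogonalProjection K (A x) = 0 :=
        Submodule.orthogonalProjectionOnto_apply_of_mem_orthogonal (hperp x)
      rw [this]
      simp
    rw [← key]
    calc ‖(Submodule.orthogonalProjection K (f x - x) : E)‖
        = ‖Submodule.orthogonalProjection K (f x - x)‖ := rfl
      _ ≤ ‖Submodule.orthogonalProjection K‖ * ‖f x - x‖ :=
          (Submodule.orthogonalProjection K).le_opNorm (f x - x)
      _ ≤ 1 * ‖f x - x‖ :=
          mul_le_mul_of_nonneg_right (Submodule.orthogonalProjectionOnto_norm_le K) (norm_nonneg _)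
      _ = ‖f x - x‖ := one_mul _
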